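/- Let π be either player, let Δ be a π-delay of a run Γ, and let ⟨Ψ, πα⟩ be a finite initial segment of Δ. Let ⟨Φ, πα⟩ be the shortest initial segment of Γ containing all π-labeled moves of ⟨Ψ, πα⟩ (such an initial segment exists and ends with the labmove πα, since Γ and Δ have identical subsequences of π-labeled moves). Then the subsequence of ¬π-labeled moves of Φ is an initial segment of the subsequence of ¬π-labeled moves of Ψ, and, letting Θ be the sequence of ¬π-labeled moves of Ψ that do not occur in Φ (i.e., the remainder of Ψ's ¬π-subsequence after Φ's ¬π-subsequence), the run ⟨Ψ, πα⟩ is a π-delay of the run ⟨Φ, πα, Θ⟩. -/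

import Mathlib

/- ============================================================
   Computability Logic: runs, constant games, delays, static
   games, and the tight/loose toggling-branching recurrences.
   ============================================================ -/

/-- The two players: `top` (⊤, the machine) and `bot` (⊥, the environment). -/
inductive Player : Type
  | top : Player
  | bot : Player
deriving DecidableEq

/-- The adversary (opposite) of a player. -/
def Player.opp : Player → Player
  | .top => .bot
  | .bot => .top

/-- Symbols of the fixed move alphabet: the bits `0` and `1`, the period `.`,
the colon `:`, and (countably many) other characters. -/
inductive CSym : Type
  | b0 : CSym
  | b1 : CSym
  | dot : CSym
  | colon : CSym
  | ch : ℕ → CSym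
deriving DecidableEq

/-- A move is a finite string over the fixed alphabet. -/
abbrev Move := List CSym

/-- A labmove is a move together with the label of the player who made it. -/
abbrev Labmove := Player × Move

/-- A run is a finite or infinite sequence of labmoves. -/
abbrev Run := Stream'.Seq Labmove

/-- A position is a finite run. -/
abbrev Position := List Labmove

/-- The symbol encoding a bit. -/
def bitSym (b : Bool) : CSym := if b then .b1 else .b0

/-- The move that is the bare bitstring `w`. -/
def bitsMove (w : List Bool) : Move := w.map bitSym

/-- The (replicative-style) move `w:`. -/
def repMove (w : List Bool) : Move := bitsMove w ++ [.colon]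

/-- The (non-replicative-style) move `w.α`. -/
def dotMove (w : List Bool) (α : Move) : Move := bitsMove w ++ (.dot :: α)

/-- Decode a move that is a bare bitstring. -/
def asBits : Move → Option (List Bool)
  | [] => some []
  | .b0 :: r => (asBits r).map (false :: ·)
  | .b1 :: r => (asBits r).map (true :: ·)
  | _ => none

/-- Decode a move of the form `w:` (`w` a bitstring). -/
def asRep : Move → Option (List Bool)
  | [.colon] => some []
  | .b0 :: r => (asRep r).map (false :: ·)
  | .b1 :: r => (asRep r).map (true :: ·)
  | _ => none

/-- Decode a move of the form `w.α` (`w` a bitstring, `α` a move), splitting at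
the (unique such) period. -/
def splitDot : Move → Option (List Bool × Move)
  | .dot :: r => some ([], r)
  | .b0 :: r => (splitDot r).map (fun p => (false :: p.1, p.2))
  | .b1 :: r => (splitDot r).map (fun p => (true :: p.1, p.2))
  | _ => none

/-- Infinite bitstrings. -/
abbrev IStr := ℕ → Bool

/-- The length-`n` initial segment of an infinite bitstring. -/
def prefOf (n : ℕ) (v : IStr) : List Bool := (List.range n).map v

/-- `u` is a finite initial segment of the infinite bitstring `v`. -/
def IsPref (u : List Bool) (v : IStr) : Prop := u = prefOf u.length v

instance (u : List Bool) (v : IStr) : Decidable (IsPref u v) := by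
  unfold IsPref; infer_instance

/-- The finite bitstring `w` with infinitely many `0`s appended. -/
def ezero (w : List Bool) : IStr := fun i => w.getD i false

/-- The finite bitstring `w` followed by the infinite bitstring `v`. -/
def capp (w : List Bool) (v : IStr) : IStr :=
  fun i => if i < w.length then w.getD i false else v (i - w.length)

/-- The indices of `s` whose entry is kept by the filtering function `p`. -/
def fmPred {α β : Type*} (p : α → Option β) (s : Stream'.Seq α) (i : ℕ) : Prop :=
  ∃ a, s.get? i = some a ∧ (p a).isSome

/-- `p` has at least `n+1` witnesses. -/
def HasNth (p : ℕ → Prop) (n : ℕ) : Prop :=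
  ∀ hf : (setOf p).Finite, n < hf.toFinset.card

open Classical in
/-- The subsequence of a (finite or infinite) sequence obtained by
filtering/translating its entries through `p`. -/
noncomputable def seqFilterMap {α β : Type*} (p : α → Option β) (s : Stream'.Seq α) :
    Stream'.Seq β := by
  refine ⟨fun k => if HasNth (fmPred p s) k
    then ((s.get? (Nat.nth (fmPred p s) k)).bind p) else none, ?_⟩
  intro n hn
  have hval : ∀ k, HasNth (fmPred p s) k →
      (if HasNth (fmPred p s) k then ((s.get? (Nat.nth (fmPred p s) k)).bind p) else none)
        ≠ none := by
    intro k hk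
    obtain ⟨a, ha, hpa⟩ := Nat.nth_mem (p := fmPred p s) k hk
    rw [if_pos hk, ha]
    simpa [Option.isSome_iff_ne_none] using hpa
  by_cases h : HasNth (fmPred p s) (n + 1)
  · exact absurd hn (hval n (fun hf => lt_of_le_of_lt (Nat.le_succ n) (h hf)))
  · exact if_neg h

/-- The filtered subsequence of a position (finite-run analogue of `seqFilterMap`). -/
def listFilterMap {β : Type*} (p : Labmove → Option β) (Φ : Position) : List β :=
  Φ.filterMap p

/-- The filtering function for `Ω^{≼v}`: keep labmoves `π u.α` with `u` an initial
segment of `v`, turning them into `π α`. -/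
def subFn (v : IStr) (lm : Labmove) : Option Labmove :=
  match splitDot lm.2 with
  | some (u, α) => if IsPref u v then some (lm.1, α) else none
  | none => none

/-- `Ω^{≼v}` for a run `Ω`. -/
noncomputable def subAt (v : IStr) (Γ : Run) : Run := seqFilterMap (subFn v) Γ

/-- `Φ^{≼v}` for a position `Φ`. -/
def subAtL (v : IStr) (Φ : Position) : Position := Φ.filterMap (subFn v)

/-- The result of changing every label in a run to its opposite. -/
def negRun (Γ : Run) : Run := Γ.map (fun lm => (lm.1.opp, lm.2))

/-- The subsequence of `π`-labeled moves of a run. -/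
noncomputable def subseqOf (π : Player) (Γ : Run) : Run :=
  seqFilterMap (fun lm => if lm.1 = π then some lm else none) Γ

/-- The subsequence of `π`-labeled moves of a position. -/
def subL (π : Player) (Φ : Position) : Position :=
  Φ.filter (fun lm => decide (lm.1 = π))

/-- The indices of the `π`-labeled moves of a run. -/
def labPred (π : Player) (Γ : Run) (i : ℕ) : Prop := ∃ m, Γ.get? i = some (π, m)

/-- `Δ` is a `π`-delay of `Γ`: (1) for both players `π'`, the subsequence of
`π'`-labeled moves of `Δ` is identical to that of `Γ`; (2) whenever the `n`-th
`π`-labeled move is made later than the `k`-th `¬π`-labeled move in `Γ`, so is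
it in `Δ`. -/
def Delay (π : Player) (Δ Γ : Run) : Prop :=
  (∀ π' : Player, subseqOf π' Δ = subseqOf π' Γ) ∧
  (∀ n k : ℕ, HasNth (labPred π Γ) n → HasNth (labPred π.opp Γ) k →
    Nat.nth (labPred π Γ) n > Nat.nth (labPred π.opp Γ) k →
    Nat.nth (labPred π Δ) n > Nat.nth (labPred π.opp Δ) k)

/-- A constant game: a set of legal runs and an assignment of winners. -/
structure Game where
  legal : Run → Prop
  wins : Run → Player

/-- Well-formedness of a constant game: the empty position is legal, and a run
is legal iff all of its finite initial segments are. -/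
def Game.IsGame (A : Game) : Prop :=
  A.legal (Stream'.Seq.ofList []) ∧
  ∀ Γ : Run, A.legal Γ ↔ ∀ n : ℕ, A.legal (Stream'.Seq.ofList (Stream'.Seq.take n Γ))

/-- The run `Γ` is `π`-illegal in `A`: its shortest illegal initial segment has
the form `⟨Φ, πα⟩`. -/
def Game.IllegalBy (A : Game) (π : Player) (Γ : Run) : Prop :=
  ∃ n : ℕ,
    (∀ m ≤ n, A.legal (Stream'.Seq.ofList (Stream'.Seq.take m Γ))) ∧
    ¬ A.legal (Stream'.Seq.ofList (Stream'.Seq.take (n + 1) Γ)) ∧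
    ∃ m : Move, Γ.get? n = some (π, m)

/-- `Γ` is a `π`-won run of `A`: either `Γ` is legal and `Wn` names `π`, or `Γ`
is `¬π`-illegal (an illegal run is won by the adversary of the first offender). -/
def Game.won (A : Game) (π : Player) (Γ : Run) : Prop :=
  (A.legal Γ ∧ A.wins Γ = π) ∨ A.IllegalBy π.opp Γ

/-- A constant game is static iff `π`-won runs are preserved by `π`-delays. -/
def Game.Static (A : Game) : Prop :=
  ∀ (π : Player) (Γ Δ : Run), Delay π Δ Γ → A.won π Γ → A.won π Δ

/-- The negation `¬A` of a constant game: the roles of the players are interchanged. -/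
def Game.neg (A : Game) : Game where
  legal Γ := A.legal (negRun Γ)
  wins Γ := (A.wins (negRun Γ)).opp

/-- `w` is an actual node of the position `Φ`: `w` is empty, or `w = u0` or
`w = u1` for some bitstring `u` such that `Φ` contains the move `u:`. -/
def ActualNode (Φ : Position) (w : List Bool) : Prop :=
  w = [] ∨ ∃ (u : List Bool) (b : Bool), w = u ++ [b] ∧ ∃ π : Player, (π, repMove u) ∈ Φ

/-- `w` is an outer actual node of `Φ`: an actual node that is not a proper
prefix of any other actual node of `Φ`. -/
def OuterNode (Φ : Position) (w : List Bool) : Prop :=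
  ActualNode Φ w ∧ ∀ w' : List Bool, ActualNode Φ w' → w <+: w' → w = w'

/-- `m` is a legal move by `π` in the legal position `Φ` of `⫰ᵀA`: a switch
move, a replicative move, or a non-replicative move. -/
def TightMove (A : Game) (Φ : Position) (π : Player) (m : Move) : Prop :=
  (π = .bot ∧ ∃ w : List Bool, asBits m = some w ∧ ActualNode Φ w) ∨
  (π = .bot ∧ ∃ w : List Bool, asRep m = some w ∧ OuterNode Φ w) ∨
  (∃ (w : List Bool) (α : Move), splitDot m = some (w, α) ∧ ActualNode Φ w ∧
    ∀ v : IStr, A.legal (Stream'.Seq.ofList (subAtL (capp w v) Φ ++ [(π, α)])))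

/-- The legal positions of `⫰ᵀA`. -/
inductive TightLegalPos (A : Game) : Position → Prop
  | nil : TightLegalPos A []
  | snoc {Φ : Position} {π : Player} {m : Move} :
      TightLegalPos A Φ → TightMove A Φ π m → TightLegalPos A (Φ ++ [(π, m)])

/-- The indices of the switch moves (by player `π`) of a run: `π`-labeled moves
whose move part is a bare bitstring. -/
def SwSetP (π : Player) (Γ : Run) : Set ℕ :=
  {i | ∃ (m : Move) (w : List Bool), Γ.get? i = some (π, m) ∧ asBits m = some w}

open Classical in
/-- The index of the last switch move (by `π`) of a run, when there are finitely
many and at least one (junk value `0` otherwise). -/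
noncomputable def lastSwitchIdxP (π : Player) (Γ : Run) : ℕ :=
  if h : (SwSetP π Γ).Finite ∧ (SwSetP π Γ).Nonempty then
    h.1.toFinset.max' (h.1.toFinset_nonempty.mpr h.2)
  else 0

open Classical in
/-- The bitstring of the last switch move (by `π`) of a run; the empty bitstring
if there are no switch moves (or infinitely many). -/
noncomputable def lastSwitchBitsP (π : Player) (Γ : Run) : List Bool :=
  if (SwSetP π Γ).Finite ∧ (SwSetP π Γ).Nonempty then
    ((Γ.get? (lastSwitchIdxP π Γ)).bind (fun lm => asBits lm.2)).getD []
  else []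

/-- The infinite bitstring `t`: the last (`⊥`-made) switch move of `Γ` with
infinitely many `0`s appended, or the infinite string of `0`s if there are no
switch moves. -/
noncomputable def tStream (Γ : Run) : IStr := ezero (lastSwitchBitsP .bot Γ)

open Classical in
/-- The tight toggling-branching recurrence `⫰ᵀA`. -/
noncomputable def tight (A : Game) : Game where
  legal Γ := ∀ n : ℕ, TightLegalPos A (Stream'.Seq.take n Γ)
  wins Γ :=
    if (SwSetP .bot Γ).Finite ∧ A.won .bot (subAt (tStream Γ) Γ) then .bot else .top

/-- The tight toggling-branching corecurrence `⫯ᵀA = ¬⫰ᵀ¬A`. -/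
noncomputable def cotight (A : Game) : Game := Game.neg (tight (Game.neg A))

/-- The shape of legal labmoves of `⫰ᴸA`: `⊥w` (a switch move) for a bitstring
`w`, or `πw.α`. -/
def LooseShape (lm : Labmove) : Prop :=
  (lm.1 = .bot ∧ ∃ w : List Bool, asBits lm.2 = some w) ∨
  (∃ (w : List Bool) (α : Move), splitDot lm.2 = some (w, α))

open Classical in
/-- The loose toggling-branching recurrence `⫰ᴸA`. -/
noncomputable def loose (A : Game) : Game where
  legal Γ := (∀ (i : ℕ) (lm : Labmove), Γ.get? i = some lm → LooseShape lm) ∧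
    ∀ v : IStr, A.legal (subAt v Γ)
  wins Γ :=
    if (SwSetP .bot Γ).Finite ∧ A.won .bot (subAt (tStream Γ) Γ) then .bot else .top

/-- The loose toggling-branching corecurrence `⫯ᴸA = ¬⫰ᴸ¬A`. -/
noncomputable def coloose (A : Game) : Game := Game.neg (loose (Game.neg A))

/-- The sequence of (bitstrings of) switch moves made by `π` in a run, in order. -/
noncomputable def swSeq (π : Player) (Γ : Run) : Stream'.Seq (List Bool) :=
  seqFilterMap (fun lm => if lm.1 = π then asBits lm.2 else none) Γ

/-- The move `i.α` (component prefix for parallel combinations). -/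
def compMove (i : ℕ) (α : Move) : Move := .ch i :: .dot :: α

/-- `Δ^{i.}`: the labmoves of the form `π i.α` of `Δ`, with the prefix `i.` removed. -/
noncomputable def proj (i : ℕ) (Δ : Run) : Run :=
  seqFilterMap (fun lm =>
    match lm.2 with
    | .ch j :: .dot :: α => if j = i then some (lm.1, α) else none
    | _ => none) Δ

open Classical in
/-- The parallel disjunction `A ∨ B`. -/
noncomputable def Game.por (A B : Game) : Game where
  legal Δ :=
    (∀ (k : ℕ) (lm : Labmove), Δ.get? k = some lm →
      ∃ (i : ℕ) (α : Move), (i = 1 ∨ i = 2) ∧ lm.2 = compMove i α) ∧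
    A.legal (proj 1 Δ) ∧ B.legal (proj 2 Δ)
  wins Δ :=
    if A.won .top (proj 1 Δ) ∨ B.won .top (proj 2 Δ) then .top else .bot


/- ===== Auxiliary lemmas for the delay theorem ===== -/
section DelayHelpers
open Classical

lemma Player.opp_ne (π : Player) : π.opp ≠ π := by cases π <;> simp [Player.opp]

lemma Player.eq_or_opp (π' π : Player) : π' = π ∨ π' = π.opp := by
  cases π <;> cases π' <;> simp [Player.opp]

def labFn (π : Player) : Labmove → Option Labmove :=
  fun lm => if lm.1 = π then some lm else none

lemma labPred_eq (π : Player) (Γ : Run) : labPred π Γ = fmPred (labFn π) Γ := by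
  funext i; apply propext
  constructor
  · rintro ⟨m, hm⟩
    exact ⟨(π, m), hm, by simp [labFn]⟩
  · rintro ⟨a, ha, hs⟩
    by_cases h : a.1 = π
    · exact ⟨a.2, by rw [ha, ← h]⟩
    · simp [labFn, h] at hs

lemma filterMap_labFn (π : Player) (l : Position) : l.filterMap (labFn π) = subL π l := by
  induction l with
  | nil => rfl
  | cons a t ih =>
    by_cases h : a.1 = π <;>
      simp [labFn, subL, List.filter_cons, List.filterMap_cons, h] <;>
      simpa [subL] using ih

lemma count_congr' {p q : ℕ → Prop} (n : ℕ) (h : ∀ j < n, (p j ↔ q j)) :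
    Nat.count p n = Nat.count q n := by
  induction n with
  | zero => simp
  | succ n ih =>
    rw [Nat.count_succ, Nat.count_succ, ih (fun j hj => h j (Nat.lt_succ_of_lt hj)),
      if_congr (h n (Nat.lt_succ_self n)) rfl rfl]

lemma hasNth_of_lt_count {p : ℕ → Prop} {k n : ℕ} (h : k < Nat.count p n) : HasNth p k :=
  fun hf => lt_of_lt_of_le h (Nat.count_le_card hf n)

lemma count_eq_card' {p : ℕ → Prop} {n : ℕ} (hb : ∀ i, p i → i < n)
    (hf : (setOf p).Finite) : hf.toFinset.card = Nat.count p n := by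
  rw [Nat.count_eq_card_filter_range]
  congr 1
  ext i
  simp only [Set.Finite.mem_toFinset, Set.mem_setOf_eq, Finset.mem_filter, Finset.mem_range]
  exact ⟨fun h => ⟨hb i h, h⟩, fun h => h.2⟩

lemma lt_count_of_hasNth {p : ℕ → Prop} {k n : ℕ} (hb : ∀ i, p i → i < n)
    (h : HasNth p k) : k < Nat.count p n := by
  have hf : (setOf p).Finite := Set.Finite.subset (Set.finite_Iio n) (fun i hi => hb i hi)
  have := h hf
  rwa [count_eq_card' hb hf] at this

lemma core {α β : Type*} (p : α → Option β) (R : Stream'.Seq α) (X : List α)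
    (h : ∀ i, i < X.length → R.get? i = X[i]?) :
    Nat.count (fmPred p R) X.length = (X.filterMap p).length ∧
      ∀ k, k < (X.filterMap p).length → ∃ i, i < X.length ∧ fmPred p R i ∧
        Nat.count (fmPred p R) i = k ∧ (X.filterMap p)[k]? = (R.get? i).bind p := by
  induction X using List.reverseRecOn with
  | nil => simp
  | append_singleton X a ih =>
    have hXlen : X.length < (X ++ [a]).length := by simp
    have hX : ∀ i, i < X.length → R.get? i = X[i]? := fun i hi => by
      rw [h i (Nat.lt_of_lt_of_le hi (Nat.le_of_lt hXlen)), List.getElem?_append_left hi]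
    have ha : R.get? X.length = some a := by
      rw [h X.length hXlen, List.getElem?_concat_length]
    obtain ⟨hc, hk⟩ := ih hX
    have hfm : fmPred p R X.length ↔ (p a).isSome := by
      constructor
      · rintro ⟨b, hb, hs⟩; rw [ha] at hb; cases hb; exact hs
      · intro hs; exact ⟨a, ha, hs⟩
    have hlen : (X ++ [a]).length = X.length + 1 := by simp
    cases hpa : p a with
    | none =>
      have h1 : (X ++ [a]).filterMap p = X.filterMap p := by
        simp [List.filterMap_append, List.filterMap_cons, hpa]
      have h2 : ¬ fmPred p R X.length := by rw [hfm, hpa]; simp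
      constructor
      · rw [hlen, Nat.count_succ, if_neg h2, hc, h1, Nat.add_zero]
      · rw [h1]
        intro k hk'
        obtain ⟨i, hi, h3, h4, h5⟩ := hk k hk'
        exact ⟨i, Nat.lt_of_lt_of_le hi (Nat.le_of_lt hXlen), h3, h4, h5⟩
    | some b =>
      have h1 : (X ++ [a]).filterMap p = X.filterMap p ++ [b] := by
        simp [List.filterMap_append, List.filterMap_cons, hpa]
      have h2 : fmPred p R X.length := by rw [hfm, hpa]; simp
      constructor
      · rw [hlen, Nat.count_succ, if_pos h2, hc, h1]; simp
      · rw [h1]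
        intro k hk'
        rcases Nat.lt_or_ge k (X.filterMap p).length with hlt | hge
        · obtain ⟨i, hi, h3, h4, h5⟩ := hk k hlt
          exact ⟨i, Nat.lt_of_lt_of_le hi (Nat.le_of_lt hXlen), h3, h4,
            by rw [List.getElem?_append_left hlt, h5]⟩
        · have hkeq : k = (X.filterMap p).length := by
            simp only [List.length_append, List.length_cons, List.length_nil] at hk'
            omega
          refine ⟨X.length, hXlen, h2, by rw [hkeq, ← hc], ?_⟩
          rw [hkeq, List.getElem?_concat_length, ha]
          simp [hpa]

lemma seqFilterMap_get {α β : Type*} (p : α → Option β) (R : Stream'.Seq α) (X : List α)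
    (h : ∀ i, i < X.length → R.get? i = X[i]?) :
    ∀ k, k < (X.filterMap p).length → (seqFilterMap p R).get? k = (X.filterMap p)[k]? := by
  intro k hk
  obtain ⟨hc, hkk⟩ := core p R X h
  obtain ⟨i, hi, hfm, hcnt, hval⟩ := hkk k hk
  have hHN : HasNth (fmPred p R) k := hasNth_of_lt_count (p := fmPred p R) (n := X.length)
    (by rw [hc]; exact hk)
  have hnth : Nat.nth (fmPred p R) k = i := by
    rw [← hcnt]; exact Nat.nth_count hfm
  show (if HasNth (fmPred p R) k
    then ((R.get? (Nat.nth (fmPred p R) k)).bind p) else none) = _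
  rw [if_pos hHN, hnth, hval]

lemma seqFilterMap_get_ne_none_iff {α β : Type*} (p : α → Option β) (R : Stream'.Seq α)
    (k : ℕ) : (seqFilterMap p R).get? k ≠ none ↔ HasNth (fmPred p R) k := by
  constructor
  · intro hne
    by_contra hn
    apply hne
    show (if HasNth (fmPred p R) k
      then ((R.get? (Nat.nth (fmPred p R) k)).bind p) else none) = none
    rw [if_neg hn]
  · intro hHN
    obtain ⟨a, ha, hs⟩ := Nat.nth_mem (p := fmPred p R) k hHN
    show (if HasNth (fmPred p R) k
      then ((R.get? (Nat.nth (fmPred p R) k)).bind p) else none) ≠ none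
    rw [if_pos hHN, ha]
    simpa [Option.isSome_iff_ne_none] using hs

lemma seqFilterMap_ofList {α β : Type*} (p : α → Option β) (X : List α) :
    seqFilterMap p (Stream'.Seq.ofList X) = Stream'.Seq.ofList (X.filterMap p) := by
  apply Stream'.Seq.ext
  intro k
  have h : ∀ i, i < X.length → (Stream'.Seq.ofList X).get? i = X[i]? := fun i _ => by
    rw [Stream'.Seq.ofList_get?]
  by_cases hk : k < (X.filterMap p).length
  · rw [seqFilterMap_get p _ X h k hk, Stream'.Seq.ofList_get?]
  · have h1 : (Stream'.Seq.ofList (X.filterMap p)).get? k = none := by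
      rw [Stream'.Seq.ofList_get?]
      exact List.getElem?_eq_none (Nat.le_of_not_lt hk)
    rw [h1]
    by_contra hne
    have hHN := (seqFilterMap_get_ne_none_iff p _ k).1 hne
    have hb : ∀ i, fmPred p (Stream'.Seq.ofList X) i → i < X.length := by
      rintro i ⟨a, ha, -⟩
      by_contra hi
      rw [Stream'.Seq.ofList_get?,
        List.getElem?_eq_none (Nat.le_of_not_lt hi)] at ha
      simp at ha
    have := lt_count_of_hasNth hb hHN
    rw [(core p _ X h).1] at this
    exact hk this

lemma subseqOf_eq (π : Player) (R : Run) : subseqOf π R = seqFilterMap (labFn π) R := rfl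

lemma subseqOf_ofList (π : Player) (X : Position) :
    subseqOf π (Stream'.Seq.ofList X) = Stream'.Seq.ofList (subL π X) := by
  rw [subseqOf_eq, ← filterMap_labFn]
  exact seqFilterMap_ofList (labFn π) X

lemma count_lab {π' : Player} {R : Run} {X : Position}
    (h : ∀ i, i < X.length → R.get? i = X[i]?) :
    Nat.count (labPred π' R) X.length = (subL π' X).length := by
  rw [labPred_eq, ← filterMap_labFn]
  exact (core (labFn π') R X h).1

lemma sub_get {π' : Player} {R : Run} {X : Position}
    (h : ∀ i, i < X.length → R.get? i = X[i]?) :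
    ∀ k, k < (subL π' X).length → (subseqOf π' R).get? k = (subL π' X)[k]? := by
  intro k hk
  rw [← filterMap_labFn] at hk ⊢
  rw [subseqOf_eq]
  exact seqFilterMap_get (labFn π') R X h k hk

lemma labPred_congr {π' : Player} {R S : Run} {j : ℕ} (h : R.get? j = S.get? j) :
    labPred π' R j ↔ labPred π' S j := by unfold labPred; rw [h]

lemma subL_append (π' : Player) (l₁ l₂ : Position) :
    subL π' (l₁ ++ l₂) = subL π' l₁ ++ subL π' l₂ := List.filter_append _ _

lemma subL_single_same (π : Player) (α : Move) : subL π [(π, α)] = [(π, α)] := by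
  simp [subL]

lemma subL_single_opp {π π' : Player} (hne : π ≠ π') (α : Move) :
    subL π' [(π, α)] = [] := by simp [subL, hne]

lemma mem_subL_label {π' : Player} {l : Position} {x : Labmove}
    (h : x ∈ subL π' l) : x.1 = π' := by
  have := (List.mem_filter.1 h).2
  simpa using this

end DelayHelpers

/-- Let `Δ` be a `π`-delay of `Γ`, let `⟨Ψ, πα⟩` be a finite
initial segment of `Δ`, and let `⟨Φ, πα⟩` be the shortest initial segment of `Γ`
containing all `π`-labeled moves of `⟨Ψ, πα⟩` (characterized by: `⟨Φ, πα⟩` is an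
initial segment of `Γ` with the same `π`-subsequence as `⟨Ψ, πα⟩`). Then the
`¬π`-subsequence of `Φ` is an initial segment of that of `Ψ`, and, with `Θ` the
remainder of `Ψ`'s `¬π`-subsequence after `Φ`'s `¬π`-subsequence, `⟨Ψ, πα⟩` is a
`π`-delay of `⟨Φ, πα, Θ⟩`. -/
theorem delay_prefix_structure (π : Player) (Γ Δ : Run) (hd : Delay π Δ Γ)
    (Ψ : Position) (α : Move)
    (hΨ : Stream'.Seq.take (Ψ.length + 1) Δ = Ψ ++ [(π, α)])
    (Φ : Position)
    (hΦ : Stream'.Seq.take (Φ.length + 1) Γ = Φ ++ [(π, α)])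
    (hsub : subL π (Φ ++ [(π, α)]) = subL π (Ψ ++ [(π, α)])) :
    subL π.opp Φ <+: subL π.opp Ψ ∧
    Delay π (Stream'.Seq.ofList (Ψ ++ [(π, α)]))
      (Stream'.Seq.ofList
        (Φ ++ [(π, α)] ++ (subL π.opp Ψ).drop (subL π.opp Φ).length)) := by
  classical
  obtain ⟨hd1, hd2⟩ := hd
  have hops : π ≠ π.opp := fun h => (Player.opp_ne π) h.symm
  -- entry agreement with the prefixes
  have hΓget : ∀ i, i < Φ.length + 1 → Γ.get? i = (Φ ++ [(π, α)])[i]? := by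
    intro i hi
    rw [← hΦ, Stream'.Seq.getElem?_take, if_pos hi]
  have hΔget : ∀ i, i < Ψ.length + 1 → Δ.get? i = (Ψ ++ [(π, α)])[i]? := by
    intro i hi
    rw [← hΨ, Stream'.Seq.getElem?_take, if_pos hi]
  have hΓΦ : ∀ i, i < Φ.length → Γ.get? i = Φ[i]? := fun i hi => by
    rw [hΓget i (by omega), List.getElem?_append_left hi]
  have hΔΨ : ∀ i, i < Ψ.length → Δ.get? i = Ψ[i]? := fun i hi => by
    rw [hΔget i (by omega), List.getElem?_append_left hi]
  -- the same π-subsequences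
  have hsub' : subL π Φ ++ [(π, α)] = subL π Ψ ++ [(π, α)] := by
    rw [← subL_single_same π α, ← subL_append, ← subL_append, hsub]
  have hsubΦΨ : subL π Φ = subL π Ψ := by
    have := congrArg List.dropLast hsub'
    simpa using this
  set N1 := (subL π Ψ).length with hN1
  set m := (subL π.opp Φ).length with hm
  set m' := (subL π.opp Ψ).length with hm'
  have hNΦ : (subL π Φ).length = N1 := by rw [hsubΦΨ]
  -- counts
  have cΓM : Nat.count (labPred π Γ) Φ.length = N1 := by
    rw [count_lab hΓΦ]; exact hNΦ
  have cΓM1 : Nat.count (labPred π Γ) (Φ.length + 1) = N1 + 1 := by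
    have := count_lab (π' := π) (R := Γ) (X := Φ ++ [(π, α)])
      (fun i hi => hΓget i (by simpa using hi))
    rw [subL_append, subL_single_same] at this
    simpa [hNΦ] using this
  have cΓoM : Nat.count (labPred π.opp Γ) Φ.length = m := count_lab hΓΦ
  have cΔM : Nat.count (labPred π Δ) Ψ.length = N1 := count_lab hΔΨ
  have cΔM1 : Nat.count (labPred π Δ) (Ψ.length + 1) = N1 + 1 := by
    have := count_lab (π' := π) (R := Δ) (X := Ψ ++ [(π, α)])
      (fun i hi => hΔget i (by simpa using hi))
    rw [subL_append, subL_single_same] at this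
    simpa using this
  have cΔoM : Nat.count (labPred π.opp Δ) Ψ.length = m' := count_lab hΔΨ
  -- the last π-moves
  have lpΓ : labPred π Γ Φ.length :=
    ⟨α, by rw [hΓget Φ.length (Nat.lt_succ_self _)]; exact List.getElem?_concat_length⟩
  have lpΔ : labPred π Δ Ψ.length :=
    ⟨α, by rw [hΔget Ψ.length (Nat.lt_succ_self _)]; exact List.getElem?_concat_length⟩
  have nthΓ : Nat.nth (labPred π Γ) N1 = Φ.length := by
    rw [← cΓM]; exact Nat.nth_count lpΓ
  have nthΔ : Nat.nth (labPred π Δ) N1 = Ψ.length := by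
    rw [← cΔM]; exact Nat.nth_count lpΔ
  -- every ⊥..: every of the first m ¬π-moves of Δ occurs inside Ψ
  have key1 : ∀ k, k < m → Nat.nth (labPred π.opp Δ) k < Ψ.length := by
    intro k hk
    have h1 : HasNth (labPred π Γ) N1 :=
      hasNth_of_lt_count (n := Φ.length + 1) (by rw [cΓM1]; omega)
    have h2 : HasNth (labPred π.opp Γ) k :=
      hasNth_of_lt_count (n := Φ.length) (by rw [cΓoM]; exact hk)
    have h3 : Nat.nth (labPred π.opp Γ) k < Φ.length :=
      Nat.nth_lt_of_lt_count (by rw [cΓoM]; exact hk)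
    have h4 := hd2 N1 k h1 h2 (by rw [nthΓ]; exact h3)
    rwa [nthΔ] at h4
  have transferHN : ∀ k, HasNth (labPred π.opp Γ) k → HasNth (labPred π.opp Δ) k := by
    intro k hk
    rw [labPred_eq] at hk ⊢
    rw [show fmPred (labFn π.opp) Δ = fmPred (labFn π.opp) Δ from rfl]
    rw [← seqFilterMap_get_ne_none_iff (labFn π.opp) Δ k]
    rw [show seqFilterMap (labFn π.opp) Δ = subseqOf π.opp Δ from rfl, hd1 π.opp]
    exact (seqFilterMap_get_ne_none_iff (labFn π.opp) Γ k).2 hk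
  have key2 : ∀ k, k < m → k < m' := by
    intro k hk
    have hHNΓ : HasNth (labPred π.opp Γ) k :=
      hasNth_of_lt_count (n := Φ.length) (by rw [cΓoM]; exact hk)
    have hHNΔ : HasNth (labPred π.opp Δ) k := transferHN k hHNΓ
    have h5 : Nat.count (labPred π.opp Δ) (Nat.nth (labPred π.opp Δ) k + 1) = k + 1 := by
      rw [Nat.count_succ, Nat.count_nth hHNΔ, if_pos (Nat.nth_mem k hHNΔ)]
    have h6 : Nat.nth (labPred π.opp Δ) k + 1 ≤ Ψ.length := key1 k hk
    have h7 := Nat.count_monotone (labPred π.opp Δ) h6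
    rw [h5, cΔoM] at h7
    omega
  have hmm' : m ≤ m' := by
    by_contra h
    push_neg at h
    exact absurd (key2 m' h) (lt_irrefl m')
  -- the prefix property
  have hpre : subL π.opp Φ = (subL π.opp Ψ).take m := by
    apply List.ext_getElem?
    intro i
    by_cases hi : i < m
    · calc (subL π.opp Φ)[i]? = (subseqOf π.opp Γ).get? i := (sub_get hΓΦ i hi).symm
        _ = (subseqOf π.opp Δ).get? i := by rw [hd1]
        _ = (subL π.opp Ψ)[i]? := sub_get hΔΨ i (lt_of_lt_of_le hi hmm')
        _ = ((subL π.opp Ψ).take m)[i]? := by rw [List.getElem?_take, if_pos hi]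
    · rw [List.getElem?_eq_none (by omega), List.getElem?_eq_none (by simp; omega)]
  refine ⟨by rw [hpre]; exact List.take_prefix m _, ?_⟩
  -- Part 2: the delay property
  have hΘself : subL π.opp ((subL π.opp Ψ).drop m) = (subL π.opp Ψ).drop m :=
    List.filter_eq_self.mpr (fun x hx => by
      simp [mem_subL_label (List.mem_of_mem_drop hx)])
  have hΘnil : subL π ((subL π.opp Ψ).drop m) = [] :=
    List.filter_eq_nil_iff.mpr (fun x hx => by
      have h := mem_subL_label (List.mem_of_mem_drop hx)
      simp [h, Player.opp_ne π])
  have hGsubo : subL π.opp (Φ ++ [(π, α)] ++ (subL π.opp Ψ).drop m) = subL π.opp Ψ := by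
    rw [subL_append, subL_append, subL_single_opp hops, hΘself, List.append_nil, hpre]
    exact List.take_append_drop m _
  have hGsubπ : subL π (Φ ++ [(π, α)] ++ (subL π.opp Ψ).drop m)
      = subL π Ψ ++ [(π, α)] := by
    rw [subL_append, subL_append, subL_single_same, hΘnil, List.append_nil, hsubΦΨ]
  constructor
  · intro π'
    rw [subseqOf_ofList, subseqOf_ofList]
    rcases Player.eq_or_opp π' π with h | h <;> subst h
    · rw [hGsubπ, subL_append, subL_single_same]
    · rw [hGsubo, subL_append, subL_single_opp hops, List.append_nil]
  · intro n k hn hk hgt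
    set G := Φ ++ [(π, α)] ++ (subL π.opp Ψ).drop m with hGdef
    have hGget : ∀ i : ℕ, (Stream'.Seq.ofList G).get? i = G[i]? := fun i => by
      rw [Stream'.Seq.ofList_get?]
    have bounded : ∀ (π' : Player) (i : ℕ), labPred π' (Stream'.Seq.ofList G) i →
        i < G.length := by
      rintro π' i ⟨mm, hmm⟩
      by_contra hi
      rw [hGget, List.getElem?_eq_none (Nat.le_of_not_lt hi)] at hmm
      simp at hmm
    have cG : Nat.count (labPred π (Stream'.Seq.ofList G)) G.length = N1 + 1 := by
      have := count_lab (π' := π) (R := Stream'.Seq.ofList G) (X := G)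
        (fun i _ => hGget i)
      rw [hGsubπ] at this
      simpa using this
    have cGo : Nat.count (labPred π.opp (Stream'.Seq.ofList G)) G.length = m' := by
      have := count_lab (π' := π.opp) (R := Stream'.Seq.ofList G) (X := G)
        (fun i _ => hGget i)
      rw [hGsubo] at this
      exact this
    have hG' : ∀ i, i < Φ.length + 1 → (Stream'.Seq.ofList G).get? i = (Φ ++ [(π, α)])[i]? := by
      intro i hi
      rw [hGget i, hGdef, List.getElem?_append_left (by simpa using hi)]
    have hGΦ : ∀ i, i < Φ.length → (Stream'.Seq.ofList G).get? i = Φ[i]? := fun i hi => by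
      rw [hG' i (by omega), List.getElem?_append_left hi]
    have cGM1 : Nat.count (labPred π (Stream'.Seq.ofList G)) (Φ.length + 1) = N1 + 1 := by
      have := count_lab (π' := π) (R := Stream'.Seq.ofList G) (X := Φ ++ [(π, α)])
        (fun i hi => hG' i (by simpa using hi))
      rw [subL_append, subL_single_same] at this
      simpa [hNΦ] using this
    have cGoM : Nat.count (labPred π.opp (Stream'.Seq.ofList G)) Φ.length = m :=
      count_lab hGΦ
    have cGoM1 : Nat.count (labPred π.opp (Stream'.Seq.ofList G)) (Φ.length + 1) = m := by
      have := count_lab (π' := π.opp) (R := Stream'.Seq.ofList G) (X := Φ ++ [(π, α)])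
        (fun i hi => hG' i (by simpa using hi))
      rw [subL_append, subL_single_opp hops, List.append_nil] at this
      simpa using this
    have hnN : n < N1 + 1 := by
      have := lt_count_of_hasNth (bounded π) hn
      rwa [cG] at this
    have hkm' : k < m' := by
      have := lt_count_of_hasNth (bounded π.opp) hk
      rwa [cGo] at this
    by_cases hkm : k < m
    · -- main case: the k-th ¬π-move is inside Φ
      have hagreeΓ : ∀ j, j < Φ.length + 1 →
          Γ.get? j = (Stream'.Seq.ofList G).get? j := fun j hj => by
        rw [hΓget j hj, hG' j hj]
      have hi2M : Nat.nth (labPred π.opp (Stream'.Seq.ofList G)) k < Φ.length :=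
        Nat.nth_lt_of_lt_count (by rw [cGoM]; exact hkm)
      have hp2 : labPred π.opp (Stream'.Seq.ofList G)
          (Nat.nth (labPred π.opp (Stream'.Seq.ofList G)) k) := Nat.nth_mem k hk
      have hc2 : Nat.count (labPred π.opp (Stream'.Seq.ofList G))
          (Nat.nth (labPred π.opp (Stream'.Seq.ofList G)) k) = k := Nat.count_nth hk
      have hp2Γ : labPred π.opp Γ (Nat.nth (labPred π.opp (Stream'.Seq.ofList G)) k) :=
        (labPred_congr (hagreeΓ _ (by omega))).mpr hp2
      have hc2Γ : Nat.count (labPred π.opp Γ)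
          (Nat.nth (labPred π.opp (Stream'.Seq.ofList G)) k) = k := by
        rw [count_congr' _ (fun j hj => labPred_congr (hagreeΓ j (by omega)))]
        exact hc2
      have hnth2Γ : Nat.nth (labPred π.opp Γ) k
          = Nat.nth (labPred π.opp (Stream'.Seq.ofList G)) k := by
        nth_rewrite 1 [← hc2Γ]; exact Nat.nth_count hp2Γ
      have hj2M : Nat.nth (labPred π (Stream'.Seq.ofList G)) n < Φ.length + 1 :=
        Nat.nth_lt_of_lt_count (by rw [cGM1]; exact hnN)
      have hp1 : labPred π (Stream'.Seq.ofList G)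
          (Nat.nth (labPred π (Stream'.Seq.ofList G)) n) := Nat.nth_mem n hn
      have hc1 : Nat.count (labPred π (Stream'.Seq.ofList G))
          (Nat.nth (labPred π (Stream'.Seq.ofList G)) n) = n := Nat.count_nth hn
      have hp1Γ : labPred π Γ (Nat.nth (labPred π (Stream'.Seq.ofList G)) n) :=
        (labPred_congr (hagreeΓ _ hj2M)).mpr hp1
      have hc1Γ : Nat.count (labPred π Γ)
          (Nat.nth (labPred π (Stream'.Seq.ofList G)) n) = n := by
        rw [count_congr' _ (fun j hj => labPred_congr (hagreeΓ j (by omega)))]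
        exact hc1
      have hnth1Γ : Nat.nth (labPred π Γ) n
          = Nat.nth (labPred π (Stream'.Seq.ofList G)) n := by
        nth_rewrite 1 [← hc1Γ]; exact Nat.nth_count hp1Γ
      have hgtΓ : Nat.nth (labPred π Γ) n > Nat.nth (labPred π.opp Γ) k := by
        rw [hnth1Γ, hnth2Γ]; exact hgt
      have HNn : HasNth (labPred π Γ) n :=
        hasNth_of_lt_count (n := Φ.length + 1) (by rw [cΓM1]; omega)
      have HNk : HasNth (labPred π.opp Γ) k :=
        hasNth_of_lt_count (n := Φ.length) (by rw [cΓoM]; exact hkm)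
      have hdd := hd2 n k HNn HNk hgtΓ
      -- bounds and transfer on the Δ side
      have HNN1 : HasNth (labPred π Δ) N1 :=
        hasNth_of_lt_count (n := Ψ.length + 1) (by rw [cΔM1]; omega)
      have hjΔ : Nat.nth (labPred π Δ) n ≤ Ψ.length := by
        have := Nat.nth_le_nth' (show n ≤ N1 by omega) HNN1
        rwa [nthΔ] at this
      have HNnΔ : HasNth (labPred π Δ) n :=
        hasNth_of_lt_count (n := Ψ.length + 1) (by rw [cΔM1]; omega)
      have HNkΔ : HasNth (labPred π.opp Δ) k :=
        hasNth_of_lt_count (n := Ψ.length) (by rw [cΔoM]; omega)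
      have hi3 : Nat.nth (labPred π.opp Δ) k < Ψ.length := lt_of_lt_of_le hdd hjΔ
      have hagreeΔ : ∀ j, j < Ψ.length + 1 →
          Δ.get? j = (Stream'.Seq.ofList (Ψ ++ [(π, α)])).get? j := fun j hj => by
        rw [hΔget j hj, Stream'.Seq.ofList_get?]
      have hp3 : labPred π Δ (Nat.nth (labPred π Δ) n) := Nat.nth_mem n HNnΔ
      have hc3 : Nat.count (labPred π Δ) (Nat.nth (labPred π Δ) n) = n := Nat.count_nth HNnΔ
      have hp3' : labPred π (Stream'.Seq.ofList (Ψ ++ [(π, α)])) (Nat.nth (labPred π Δ) n) :=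
        (labPred_congr (hagreeΔ _ (by omega))).mp hp3
      have hc3' : Nat.count (labPred π (Stream'.Seq.ofList (Ψ ++ [(π, α)])))
          (Nat.nth (labPred π Δ) n) = n := by
        rw [← count_congr' _ (fun j hj => labPred_congr (hagreeΔ j (by omega)))]
        exact hc3
      have hnth3 : Nat.nth (labPred π (Stream'.Seq.ofList (Ψ ++ [(π, α)]))) n
          = Nat.nth (labPred π Δ) n := by
        nth_rewrite 1 [← hc3']; exact Nat.nth_count hp3'
      have hp4 : labPred π.opp Δ (Nat.nth (labPred π.opp Δ) k) := Nat.nth_mem k HNkΔ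
      have hc4 : Nat.count (labPred π.opp Δ) (Nat.nth (labPred π.opp Δ) k) = k :=
        Nat.count_nth HNkΔ
      have hp4' : labPred π.opp (Stream'.Seq.ofList (Ψ ++ [(π, α)]))
          (Nat.nth (labPred π.opp Δ) k) :=
        (labPred_congr (hagreeΔ _ (by omega))).mp hp4
      have hc4' : Nat.count (labPred π.opp (Stream'.Seq.ofList (Ψ ++ [(π, α)])))
          (Nat.nth (labPred π.opp Δ) k) = k := by
        rw [← count_congr' _ (fun j hj => labPred_congr (hagreeΔ j (by omega)))]
        exact hc4
      have hnth4 : Nat.nth (labPred π.opp (Stream'.Seq.ofList (Ψ ++ [(π, α)]))) k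
          = Nat.nth (labPred π.opp Δ) k := by
        nth_rewrite 1 [← hc4']; exact Nat.nth_count hp4'
      rw [hnth3, hnth4]
      exact hdd
    · -- impossible case: the k-th ¬π-move would lie beyond Φ
      exfalso
      have hjn : Nat.nth (labPred π (Stream'.Seq.ofList G)) n < Φ.length + 1 :=
        Nat.nth_lt_of_lt_count (by rw [cGM1]; exact hnN)
      have hik : Nat.nth (labPred π.opp (Stream'.Seq.ofList G)) k < Φ.length + 1 :=
        lt_trans hgt hjn
      have h5 : Nat.count (labPred π.opp (Stream'.Seq.ofList G))
          (Nat.nth (labPred π.opp (Stream'.Seq.ofList G)) k + 1) = k + 1 := by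
        rw [Nat.count_succ, Nat.count_nth hk, if_pos (Nat.nth_mem k hk)]
      have h6 := Nat.count_monotone (labPred π.opp (Stream'.Seq.ofList G))
        (show Nat.nth (labPred π.opp (Stream'.Seq.ofList G)) k + 1 ≤ Φ.length + 1 from hik)
      rw [h5, cGoM1] at h6
      omega
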